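/- Let q be a prime power, V an n-dimensional F_q-vector space with n odd, and M a subspace of alternating bilinear forms on V in which every nonzero element has rank n − 1. Then dim M ≤ n. Moreover, if dim M = n, then for each nonzero u ∈ V the subspace {f ∈ M : u ∈ rad f} is exactly one-dimensional. -/

import Mathlib

set_option maxHeartbeats 1000000
set_option synthInstance.maxHeartbeats 400000

open Module

private lemma stmt10_card_submodule {K W : Type*} [Field K] [Fintype K] [AddCommMonoid W]
    [Module K W] [Module.Finite K W] (p : Submodule K W) :
    Nat.card ↥p = Fintype.card K ^ Module.finrank K ↥p := by
  have : Finite W := Module.finite_of_finite K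
  have : Fintype ↥p := Fintype.ofFinite _
  letI : AddCommGroup ↥p := Module.addCommMonoidToAddCommGroup K
  rw [Nat.card_eq_fintype_card, card_eq_pow_finrank (K := K)]

/-- if `n` is odd and `M` is a subspace of alternating bilinear forms on
`F_q^n` all of whose nonzero elements have rank `n − 1`, then `dim M ≤ n`; and if
`dim M = n`, then for each nonzero `u` the subspace `{f ∈ M : u ∈ rad f}` is
one-dimensional. -/
theorem stmt10 (q n : ℕ) (K : Type*) [Field K] [Fintype K]
    (hq : Fintype.card K = q) (hodd : Odd n)
    (M : Submodule K ((Fin n → K) →ₗ[K] (Fin n → K) →ₗ[K] K))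
    (halt : ∀ f ∈ M, ∀ x : Fin n → K, f x x = 0)
    (hrank : ∀ f ∈ M, f ≠ 0 → n - Module.finrank K (LinearMap.ker f) = n - 1) :
    Module.finrank K ↥M ≤ n ∧
      (Module.finrank K ↥M = n → ∀ u : Fin n → K, u ≠ 0 →
        Module.finrank K ↥(M ⊓ LinearMap.ker (LinearMap.applyₗ (R := K) u)) = 1) := by
  classical
  subst hq
  have hq2 : 2 ≤ Fintype.card K := Fintype.one_lt_card
  obtain hn1 | hn2 : n = 1 ∨ 2 ≤ n := by rcases hodd with ⟨k, hk⟩; omega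
  · -- the case n = 1 : every alternating form is zero, so M = ⊥
    subst hn1
    have hM : M = ⊥ := by
      rw [eq_bot_iff]
      intro f hf
      have hf0 : f = 0 := by
        apply LinearMap.ext; intro x; apply LinearMap.ext; intro y
        have hx : x = x 0 • (fun _ => (1 : K)) := by
          funext i
          have : i = 0 := Subsingleton.elim _ _
          subst this; simp
        have hy : y = y 0 • (fun _ => (1 : K)) := by
          funext i
          have : i = 0 := Subsingleton.elim _ _
          subst this; simp
        have he := halt f hf (fun _ => (1 : K))
        calc f x y = f (x 0 • (fun _ => (1 : K))) (y 0 • (fun _ => (1 : K))) := by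
              rw [← hx, ← hy]
          _ = x 0 * (y 0 * f (fun _ => (1 : K)) (fun _ => (1 : K))) := by
              simp [smul_eq_mul]; ring
          _ = 0 := by rw [he]; ring
      simp [hf0, Submodule.zero_mem]
    constructor
    · rw [hM, finrank_bot]; omega
    · intro h
      rw [hM, finrank_bot] at h
      omega
  -- main case : n ≥ 2
  have : Finite ((Fin n → K) →ₗ[K] (Fin n → K) →ₗ[K] K) := Module.finite_of_finite K
  have : Fintype ↥M := Fintype.ofFinite _
  set m := finrank K ↥M with hm
  set d : (Fin n → K) → ℕ :=
    fun u => finrank K ↥(M ⊓ LinearMap.ker (LinearMap.applyₗ (R := K) u)) with hd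
  -- Step 1: for u ≠ 0, m ≤ (n-1) + d u
  have key1 : ∀ u : Fin n → K, u ≠ 0 → m ≤ (n - 1) + d u := by
    intro u hu
    letI : AddCommGroup ↥M := Module.addCommMonoidToAddCommGroup K
    -- the evaluation-at-u additive hom on M
    let φ : ↥M →+ ((Fin n → K) →ₗ[K] K) :=
      { toFun := fun f => (f : (Fin n → K) →ₗ[K] (Fin n → K) →ₗ[K] K) u
        map_zero' := rfl
        map_add' := fun f₁ f₂ => rfl }
    -- the hyperplane of functionals vanishing at u
    let ε : ((Fin n → K) →ₗ[K] K) →ₗ[K] K :=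
      { toFun := fun ψ => ψ u
        map_add' := fun ψ₁ ψ₂ => rfl
        map_smul' := fun c ψ => rfl }
    have hHlt : finrank K ↥(LinearMap.ker ε) ≤ n - 1 := by
      obtain ⟨i, hi⟩ : ∃ i, u i ≠ 0 := by
        by_contra h
        push_neg at h
        exact hu (funext h)
      have hne : LinearMap.ker ε ≠ ⊤ := by
        intro htop
        have : LinearMap.proj (R := K) (φ := fun _ : Fin n => K) i ∈ LinearMap.ker ε := by
          rw [htop]; trivial
        rw [LinearMap.mem_ker] at this
        exact hi this
      have := Submodule.finrank_lt (K := K) hne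
      have hD : finrank K ((Fin n → K) →ₗ[K] K) = n := by
        rw [finrank_linearMap, Module.finrank_fin_fun, finrank_self, mul_one]
      omega
    -- cardinality of the kernel of φ
    have hkerφ : Nat.card ↥(φ.ker) = Fintype.card K ^ d u := by
      have e : ↥(φ.ker) ≃ ↥(M ⊓ LinearMap.ker (LinearMap.applyₗ (R := K) u)) :=
        { toFun := fun f => ⟨f.1.1, f.1.2, f.2⟩
          invFun := fun x => ⟨⟨x.1, x.2.1⟩, x.2.2⟩
          left_inv := fun _ => rfl
          right_inv := fun _ => rfl }
      rw [Nat.card_congr e, stmt10_card_submodule]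
    -- cardinality of the range of φ
    have hrangeφ : Nat.card ↥(φ.range) ≤ Fintype.card K ^ (n - 1) := by
      have hsub : (φ.range : Set ((Fin n → K) →ₗ[K] K)) ⊆
          (LinearMap.ker ε : Set ((Fin n → K) →ₗ[K] K)) := by
        rintro x ⟨f, rfl⟩
        have : ε (φ f) = 0 := halt _ f.2 u
        exact this
      have hfin : Finite ((Fin n → K) →ₗ[K] K) := Module.finite_of_finite K
      have h1 : Nat.card ↥(φ.range) ≤ Nat.card ↥(LinearMap.ker ε) :=
        Nat.card_mono (Set.toFinite _) hsub
      rw [stmt10_card_submodule] at h1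
      exact le_trans h1 (Nat.pow_le_pow_right (by omega) hHlt)
    have hMcard : Nat.card ↥M = Nat.card (↥M ⧸ φ.ker) * Nat.card ↥(φ.ker) :=
      AddSubgroup.card_eq_card_quotient_mul_card_addSubgroup _
    have hquot : Nat.card (↥M ⧸ φ.ker) = Nat.card ↥(φ.range) :=
      Nat.card_congr (QuotientAddGroup.quotientKerEquivRange φ).toEquiv
    have hcards : Fintype.card K ^ m ≤ Fintype.card K ^ ((n - 1) + d u) := by
      calc Fintype.card K ^ m = Nat.card ↥M := (stmt10_card_submodule M).symm
        _ = Nat.card ↥(φ.range) * Nat.card ↥(φ.ker) := by rw [hMcard, hquot]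
        _ ≤ Fintype.card K ^ (n - 1) * Fintype.card K ^ d u := by
            refine Nat.mul_le_mul hrangeφ (le_of_eq hkerφ)
        _ = Fintype.card K ^ ((n - 1) + d u) := (pow_add _ _ _).symm
    exact (Nat.pow_le_pow_iff_right hq2).mp hcards
  -- cardinality of the "kernel at u" slices of M
  have hw : ∀ u : Fin n → K,
      (Finset.univ.filter (fun f : ↥M => (f : (Fin n → K) →ₗ[K] (Fin n → K) →ₗ[K] K) u = 0)).card = Fintype.card K ^ d u := by
    intro u
    rw [← Fintype.card_subtype]
    have e : {f : ↥M // (f : (Fin n → K) →ₗ[K] (Fin n → K) →ₗ[K] K) u = 0} ≃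
        ↥(M ⊓ LinearMap.ker (LinearMap.applyₗ (R := K) u)) :=
      { toFun := fun f => ⟨f.1.1, ⟨f.1.2, f.2⟩⟩
        invFun := fun g => ⟨⟨g.1, g.2.1⟩, g.2.2⟩
        left_inv := fun f => rfl
        right_inv := fun g => rfl }
    rw [← Nat.card_eq_fintype_card, Nat.card_congr e, stmt10_card_submodule]
  -- cardinality of kernels of nonzero elements of M
  have hkerf : ∀ f : ↥M, (f : (Fin n → K) →ₗ[K] (Fin n → K) →ₗ[K] K) ≠ 0 →
      (Finset.univ.filter (fun u : Fin n → K => (f : (Fin n → K) →ₗ[K] (Fin n → K) →ₗ[K] K) u = 0)).card = Fintype.card K := by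
    intro f hf
    have h1 : finrank K ↥(LinearMap.ker (f : (Fin n → K) →ₗ[K] (Fin n → K) →ₗ[K] K)) = 1 := by
      have ha := hrank f f.2 hf
      have hb := Submodule.finrank_le (LinearMap.ker (f : (Fin n → K) →ₗ[K] (Fin n → K) →ₗ[K] K))
      rw [Module.finrank_fin_fun] at hb
      omega
    have e : {u : Fin n → K // (f : (Fin n → K) →ₗ[K] (Fin n → K) →ₗ[K] K) u = 0} ≃ ↥(LinearMap.ker (f : (Fin n → K) →ₗ[K] (Fin n → K) →ₗ[K] K)) :=
      Equiv.subtypeEquivRight fun u => (LinearMap.mem_ker).symm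
    rw [← Fintype.card_subtype, ← Nat.card_eq_fintype_card, Nat.card_congr e,
      stmt10_card_submodule, h1, pow_one]
  -- double counting
  have hdc : (∑ u : Fin n → K, (Finset.univ.filter (fun f : ↥M => (f : (Fin n → K) →ₗ[K] (Fin n → K) →ₗ[K] K) u = 0)).card)
      = ∑ f : ↥M, (Finset.univ.filter (fun u : Fin n → K => (f : (Fin n → K) →ₗ[K] (Fin n → K) →ₗ[K] K) u = 0)).card := by
    simp only [Finset.card_filter]
    exact Finset.sum_comm
  have hRHS : (∑ f : ↥M, (Finset.univ.filter (fun u : Fin n → K => (f : (Fin n → K) →ₗ[K] (Fin n → K) →ₗ[K] K) u = 0)).card)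
      = Fintype.card K ^ n + (Fintype.card K ^ m - 1) * Fintype.card K := by
    rw [← Finset.add_sum_erase _ _ (Finset.mem_univ (0 : ↥M))]
    congr 1
    · have : ∀ u : Fin n → K, ((0 : ↥M) : (Fin n → K) →ₗ[K] (Fin n → K) →ₗ[K] K) u = 0 := by intro u; simp
      simp [this, Finset.filter_true_of_mem, Fintype.card_fun, Fintype.card_fin]
    · rw [Finset.sum_congr rfl (fun f hf => hkerf f (by
        intro h0
        have : f = 0 := Subtype.ext h0
        exact (Finset.mem_erase.mp hf).1 this))]
      rw [Finset.sum_const, smul_eq_mul,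
        Finset.card_erase_of_mem (Finset.mem_univ _), Finset.card_univ,
        ← Nat.card_eq_fintype_card, stmt10_card_submodule, ← hm]
  have hd0 : d 0 = m := by
    show finrank K ↥(M ⊓ LinearMap.ker (LinearMap.applyₗ (R := K) (0 : Fin n → K))) = m
    rw [map_zero (LinearMap.applyₗ (R := K) (M := Fin n → K)
      (M₂ := (Fin n → K) →ₗ[K] K)), LinearMap.ker_zero, inf_top_eq]
  have hLHS : (∑ u : Fin n → K, (Finset.univ.filter (fun f : ↥M => (f : (Fin n → K) →ₗ[K] (Fin n → K) →ₗ[K] K) u = 0)).card)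
      = Fintype.card K ^ m +
        ∑ u ∈ Finset.univ.erase (0 : Fin n → K), Fintype.card K ^ d u := by
    rw [← Finset.add_sum_erase _ _ (Finset.mem_univ (0 : Fin n → K))]
    congr 1
    · rw [hw 0, hd0]
    · exact Finset.sum_congr rfl fun u _ => hw u
  set S := ∑ u ∈ Finset.univ.erase (0 : Fin n → K), Fintype.card K ^ d u with hS
  have E : Fintype.card K ^ m + S
      = Fintype.card K ^ n + (Fintype.card K ^ m - 1) * Fintype.card K := by
    rw [← hLHS, hdc, hRHS]
  have hcarderase : (Finset.univ.erase (0 : Fin n → K)).card = Fintype.card K ^ n - 1 := by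
    rw [Finset.card_erase_of_mem (Finset.mem_univ _), Finset.card_univ, Fintype.card_fun,
      Fintype.card_fin]
  -- Part 1 : m ≤ n
  have hpart1 : m ≤ n := by
    by_contra hcon
    push_neg at hcon
    have hSlb : (Fintype.card K ^ n - 1) * Fintype.card K ^ (m - n + 1) ≤ S := by
      rw [← hcarderase]
      calc (Finset.univ.erase (0 : Fin n → K)).card * Fintype.card K ^ (m - n + 1)
          = ∑ _u ∈ Finset.univ.erase (0 : Fin n → K), Fintype.card K ^ (m - n + 1) := by
            rw [Finset.sum_const, smul_eq_mul]
        _ ≤ S := by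
            refine Finset.sum_le_sum ?_
            intro u hu
            apply Nat.pow_le_pow_right (by omega)
            have := key1 u (Finset.mem_erase.mp hu).1
            omega
    -- pass to integers for the arithmetic
    set Q : ℤ := (Fintype.card K : ℤ) with hQ
    have hQ2 : (2 : ℤ) ≤ Q := by rw [hQ]; exact_mod_cast hq2
    have h1n : 1 ≤ Fintype.card K ^ n := Nat.one_le_pow _ _ (by omega)
    have h1m : 1 ≤ Fintype.card K ^ m := Nat.one_le_pow _ _ (by omega)
    have hineq : (Fintype.card K : ℤ) ^ m +
        ((Fintype.card K : ℤ) ^ n - 1) * (Fintype.card K : ℤ) ^ (m - n + 1)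
        ≤ (Fintype.card K : ℤ) ^ n + ((Fintype.card K : ℤ) ^ m - 1) * Fintype.card K := by
      have := le_trans (Nat.add_le_add_left hSlb (Fintype.card K ^ m)) (le_of_eq E)
      have := (Nat.cast_le (α := ℤ)).mpr this
      push_cast [Nat.cast_sub h1n, Nat.cast_sub h1m] at this
      convert this using 2 <;> push_cast <;> ring
    have hsplit : (Fintype.card K : ℤ) ^ m = Q ^ (m - n) * Q ^ n := by
      rw [← pow_add]
      congr 1
      omega
    have hsplit2 : (Fintype.card K : ℤ) ^ (m - n + 1) = Q ^ (m - n) * Q := by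
      rw [pow_add, pow_one]
    have hA : Q ≤ Q ^ (m - n) := by
      calc Q = Q ^ 1 := (pow_one Q).symm
        _ ≤ Q ^ (m - n) := pow_le_pow_right₀ (by omega) (by omega)
    have hB : Q ^ 2 ≤ Q ^ n := pow_le_pow_right₀ (by omega) (by omega)
    rw [hsplit, hsplit2] at hineq
    set A : ℤ := Q ^ (m - n)
    set B : ℤ := Q ^ n
    have hApos : 1 < A := by nlinarith
    have hBQ : Q < B := by nlinarith
    nlinarith [mul_pos (sub_pos.mpr hApos) (sub_pos.mpr hBQ)]
  refine ⟨hpart1, ?_⟩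
  -- Part 2 : if m = n, each d u = 1 for u ≠ 0
  intro hmn u hu
  rw [hmn] at E key1
  have hSeq : S = (Fintype.card K ^ n - 1) * Fintype.card K := by omega
  have hle : ∀ v ∈ Finset.univ.erase (0 : Fin n → K),
      Fintype.card K ≤ Fintype.card K ^ d v := by
    intro v hv
    have := key1 v (Finset.mem_erase.mp hv).1
    calc Fintype.card K = Fintype.card K ^ 1 := (pow_one _).symm
      _ ≤ Fintype.card K ^ d v := Nat.pow_le_pow_right (by omega) (by omega)
  have hsum : (∑ _v ∈ Finset.univ.erase (0 : Fin n → K), Fintype.card K)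
      = ∑ v ∈ Finset.univ.erase (0 : Fin n → K), Fintype.card K ^ d v := by
    rw [Finset.sum_const, smul_eq_mul, hcarderase, ← hS, hSeq]
  have hall := (Finset.sum_eq_sum_iff_of_le hle).mp hsum
  have humem : u ∈ Finset.univ.erase (0 : Fin n → K) :=
    Finset.mem_erase.mpr ⟨hu, Finset.mem_univ _⟩
  have := hall u humem
  have hd1 : d u = 1 := by
    have : Fintype.card K ^ 1 = Fintype.card K ^ d u := by rw [pow_one]; exact this
    exact (Nat.pow_right_injective hq2 this).symm
  exact hd1
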